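/- Let v:ℝ³→ℝ be continuous and not identically zero, and suppose u(x) := (1/(2π²))∫_{ℝ³} v(y)⁴/|x−y|² dy is finite for every x∈ℝ³. Then ∫_{ℝ³} v(y)⁴/|y|² dy < ∞, and there exist constants C>0 and R>0 such that u(x) ≥ C/|x|² whenever |x| ≥ R. -/

import Mathlib

open MeasureTheory Real Filter

/-- Lower-bound assertion of Lemma 2.1: if `u(x) = (1/(2π²)) ∫ v(y)⁴/|x-y|² dy` is finite
for every `x`, then `∫ v⁴/|y|² < ∞` and `u(x) ≥ C/|x|²` for large `|x|`. -/
theorem u_lower_bound_3d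
    (v : EuclideanSpace ℝ (Fin 3) → ℝ)
    (hv_cont : Continuous v) (hv_ne : v ≠ 0)
    (hfin : ∀ x : EuclideanSpace ℝ (Fin 3),
      Integrable (fun y => v y ^ 4 / ‖x - y‖ ^ 2)) :
    (Integrable (fun y : EuclideanSpace ℝ (Fin 3) => v y ^ 4 / ‖y‖ ^ 2)) ∧
    ∃ C R : ℝ, 0 < C ∧ 0 < R ∧
      ∀ x : EuclideanSpace ℝ (Fin 3), R ≤ ‖x‖ →
        C / ‖x‖ ^ 2 ≤ (1 / (2 * π ^ 2)) * ∫ y, v y ^ 4 / ‖x - y‖ ^ 2 := by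
  constructor
  · have h0 := hfin 0
    simpa using h0
  -- find x₀ with v x₀ ≠ 0
  obtain ⟨x₀, hx₀⟩ : ∃ x₀, v x₀ ≠ 0 := by
    by_contra h
    push_neg at h
    exact hv_ne (funext fun x => h x)
  have hε : 0 < (v x₀) ^ 4 / 2 := by positivity
  set ε := (v x₀) ^ 4 / 2 with hεdef
  have hcont4 : ContinuousAt (fun y => v y ^ 4) x₀ := (hv_cont.pow 4).continuousAt
  have hev : ∀ᶠ y in nhds x₀, ε < v y ^ 4 := by
    have : ε < v x₀ ^ 4 := by
      have : 0 < (v x₀) ^ 4 := by positivity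
      linarith
    exact hcont4.eventually (eventually_gt_nhds this)
  obtain ⟨r, hr, hball⟩ := Metric.eventually_nhds_iff_ball.mp hev
  set s := Metric.closedBall x₀ (r / 2) with hsdef
  have hs_sub : ∀ y ∈ s, ε < v y ^ 4 := fun y hy => by
    apply hball
    have : dist y x₀ ≤ r / 2 := hy
    simp only [Metric.mem_ball]
    linarith
  have hvol_pos : 0 < volume s := by
    apply Metric.measure_closedBall_pos
    positivity
  have hvol_fin : volume s < ⊤ := MeasureTheory.measure_closedBall_lt_top
  set A : ℝ := ε * (volume s).toReal with hAdef
  have hA : 0 < A := by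
    apply mul_pos hε
    exact ENNReal.toReal_pos hvol_pos.ne' hvol_fin.ne
  have hπ : (0:ℝ) < 1 / (2 * π ^ 2) := by positivity
  refine ⟨(1 / (2 * π ^ 2)) * (A / 4), 2 * (‖x₀‖ + r / 2) + 1, by positivity, by positivity, ?_⟩
  intro x hx
  have hxpos : 0 < ‖x‖ := by linarith [norm_nonneg x₀]
  -- lower bound the integral by the set integral over s
  have hnonneg : 0 ≤ᵐ[volume] fun y => v y ^ 4 / ‖x - y‖ ^ 2 := by
    filter_upwards with y
    positivity
  have hset_le : ∫ y in s, v y ^ 4 / ‖x - y‖ ^ 2 ≤ ∫ y, v y ^ 4 / ‖x - y‖ ^ 2 :=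
    setIntegral_le_integral (hfin x) hnonneg
  have hkey : ∀ y ∈ s, A / (4 * ‖x‖ ^ 2) / (volume s).toReal ≤ v y ^ 4 / ‖x - y‖ ^ 2 := by
    intro y hy
    have hyb : ‖y‖ ≤ ‖x₀‖ + r / 2 := by
      have : dist y x₀ ≤ r / 2 := hy
      calc ‖y‖ ≤ ‖x₀‖ + ‖y - x₀‖ := by
              have := norm_sub_norm_le y x₀; linarith [norm_nonneg (y - x₀)]
        _ ≤ ‖x₀‖ + r / 2 := by
              rw [← dist_eq_norm] at *; linarith
    have hxy_pos : 0 < ‖x - y‖ := by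
      have h1 : ‖x₀‖ + r / 2 < ‖x‖ := by nlinarith [norm_nonneg x₀, hr]
      have : ‖y‖ < ‖x‖ := lt_of_le_of_lt hyb h1
      have hne : x ≠ y := by rintro rfl; exact lt_irrefl _ this
      simpa [sub_ne_zero.mpr hne] using norm_pos_iff.mpr (sub_ne_zero.mpr hne)
    have hxy_le : ‖x - y‖ ≤ 2 * ‖x‖ := by
      calc ‖x - y‖ ≤ ‖x‖ + ‖y‖ := norm_sub_le x y
        _ ≤ ‖x‖ + (‖x₀‖ + r / 2) := by linarith
        _ ≤ 2 * ‖x‖ := by nlinarith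
    have hxy2 : ‖x - y‖ ^ 2 ≤ 4 * ‖x‖ ^ 2 := by nlinarith [norm_nonneg (x - y)]
    have step1 : ε / (4 * ‖x‖ ^ 2) ≤ v y ^ 4 / ‖x - y‖ ^ 2 :=
      div_le_div₀ (by positivity) (le_of_lt (hs_sub y hy)) (by positivity) hxy2
    have heq : A / (4 * ‖x‖ ^ 2) / (volume s).toReal = ε / (4 * ‖x‖ ^ 2) := by
      rw [hAdef]
      have hvs : (volume s).toReal ≠ 0 := (ENNReal.toReal_pos hvol_pos.ne' hvol_fin.ne).ne'
      field_simp
    rw [heq]; exact step1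
  have hmeas : MeasurableSet s := measurableSet_closedBall
  have hconst : A / (4 * ‖x‖ ^ 2) / (volume s).toReal * (volume s).toReal ≤
      ∫ y in s, v y ^ 4 / ‖x - y‖ ^ 2 :=
    setIntegral_ge_of_const_le_real hmeas hvol_fin.ne hkey ((hfin x).integrableOn)
  have hvs : (volume s).toReal ≠ 0 := (ENNReal.toReal_pos hvol_pos.ne' hvol_fin.ne).ne'
  have hconst' : A / (4 * ‖x‖ ^ 2) ≤ ∫ y in s, v y ^ 4 / ‖x - y‖ ^ 2 := by
    rwa [div_mul_cancel₀ _ hvs] at hconst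
  have hfinal : A / (4 * ‖x‖ ^ 2) ≤ ∫ y, v y ^ 4 / ‖x - y‖ ^ 2 := hconst'.trans hset_le
  have : (1 / (2 * π ^ 2)) * (A / (4 * ‖x‖ ^ 2)) ≤ (1 / (2 * π ^ 2)) * ∫ y, v y ^ 4 / ‖x - y‖ ^ 2 :=
    mul_le_mul_of_nonneg_left hfinal hπ.le
  calc (1 / (2 * π ^ 2)) * (A / 4) / ‖x‖ ^ 2
      = (1 / (2 * π ^ 2)) * (A / (4 * ‖x‖ ^ 2)) := by rw [mul_div_assoc, div_div]
    _ ≤ _ := this
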